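/- Let μ : [t_0, ∞) → ℝ be C¹, positive, and monotonically nondecreasing with μ(t) → ∞, and let α, β, γ, g be continuous nonnegative functions on [t_0, ∞) with g differentiable, satisfying g'(t) ≤ −γ(t)g(t) + α(t)g(t)² + β(t) for t ≥ t_0. If α(t) ≤ (μ(t)/2)(γ(t) − μ'(t)/μ(t)), β(t) ≤ (1/(2μ(t)))(γ(t) − μ'(t)/μ(t)) for all t ≥ t_0, and μ(t_0)g(t_0) < 1, then 0 ≤ g(t) < 1/μ(t) for all t ≥ t_0. -/

import Mathlib

open Set Filter intervalIntegral

theorem stmt_15 (t0 : ℝ) (ht0 : 0 ≤ t0) (μ α β γ g : ℝ → ℝ) (μ' g' : ℝ → ℝ)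
    (hμC1 : ∀ t ∈ Set.Ici t0, HasDerivAt μ (μ' t) t)
    (hμ'cont : ContinuousOn μ' (Set.Ici t0))
    (hμpos : ∀ t ∈ Set.Ici t0, 0 < μ t)
    (hμmono : ∀ t ∈ Set.Ici t0, 0 ≤ μ' t)
    (hμtop : Filter.Tendsto μ Filter.atTop Filter.atTop)
    (hαcont : ContinuousOn α (Set.Ici t0)) (hβcont : ContinuousOn β (Set.Ici t0))
    (hγcont : ContinuousOn γ (Set.Ici t0)) (hgcont : ContinuousOn g (Set.Ici t0))
    (hα : ∀ t ∈ Set.Ici t0, 0 ≤ α t) (hβ : ∀ t ∈ Set.Ici t0, 0 ≤ β t)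
    (hγ : ∀ t ∈ Set.Ici t0, 0 ≤ γ t) (hg : ∀ t ∈ Set.Ici t0, 0 ≤ g t)
    (hgderiv : ∀ t ∈ Set.Ici t0, HasDerivAt g (g' t) t)
    (hineq : ∀ t ∈ Set.Ici t0, g' t ≤ -(γ t) * g t + α t * (g t) ^ 2 + β t)
    (hαc : ∀ t ∈ Set.Ici t0, α t ≤ (μ t / 2) * (γ t - μ' t / μ t))
    (hβc : ∀ t ∈ Set.Ici t0, β t ≤ (1 / (2 * μ t)) * (γ t - μ' t / μ t))
    (hinit : μ t0 * g t0 < 1) :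
    ∀ t ∈ Set.Ici t0, 0 ≤ g t ∧ g t < 1 / μ t := by
  have hμcont : ContinuousOn μ (Set.Ici t0) := fun t ht =>
    (hμC1 t ht).continuousAt.continuousWithinAt
  -- the coefficient K, extended continuously to all of ℝ
  set K : ℝ → ℝ := fun t => (γ (max t t0) * μ (max t t0) - μ' (max t t0)) / (2 * μ (max t t0))
    with hKdef
  have hmaxmem : ∀ t : ℝ, max t t0 ∈ Set.Ici t0 := fun t => Set.mem_Ici.2 (le_max_right _ _)
  have hmaxc : Continuous (fun t : ℝ => max t t0) := continuous_id.max continuous_const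
  have hKcont : Continuous K := by
    have h1 : Continuous fun t => γ (max t t0) := hγcont.comp_continuous hmaxc hmaxmem
    have h2 : Continuous fun t => μ (max t t0) := hμcont.comp_continuous hmaxc hmaxmem
    have h3 : Continuous fun t => μ' (max t t0) := hμ'cont.comp_continuous hmaxc hmaxmem
    exact ((h1.mul h2).sub h3).div (continuous_const.mul h2)
      (fun t => by have := hμpos _ (hmaxmem t); positivity)
  have hKeq : ∀ t ∈ Set.Ici t0, K t = (γ t * μ t - μ' t) / (2 * μ t) := by
    intro t ht
    simp only [hKdef, max_eq_left (Set.mem_Ici.1 ht)]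
  -- the integrating factor
  set I : ℝ → ℝ := fun t => ∫ s in t0..t, K s with hIdef
  have hI : ∀ t : ℝ, HasDerivAt I (K t) t := fun t =>
    intervalIntegral.integral_hasDerivAt_right (hKcont.intervalIntegrable t0 t)
      hKcont.aestronglyMeasurable.stronglyMeasurableAtFilter hKcont.continuousAt
  have hIcont : Continuous I := continuous_iff_continuousAt.2 fun t => (hI t).continuousAt
  set F : ℝ → ℝ := fun t => 1 - μ t * g t with hFdef
  have hFcont : ContinuousOn F (Set.Ici t0) := continuousOn_const.sub (hμcont.mul hgcont)
  set G : ℝ → ℝ := fun t => F t * Real.exp (I t) with hGdef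
  have hGderiv : ∀ t ∈ Set.Ici t0,
      HasDerivAt G ((-(μ' t * g t + μ t * g' t) + F t * K t) * Real.exp (I t)) t := by
    intro t ht
    have hF' : HasDerivAt F (-(μ' t * g t + μ t * g' t)) t := by
      have := ((hμC1 t ht).mul (hgderiv t ht)).const_sub 1
      simpa [hFdef] using this
    have hE : HasDerivAt (fun u => Real.exp (I u)) (Real.exp (I t) * K t) t := (hI t).exp
    have := hF'.mul hE
    exact this.congr_deriv (by ring)
  -- key pointwise inequality
  have hkey : ∀ t ∈ Set.Ici t0, 0 ≤ F t →
      0 ≤ (-(μ' t * g t + μ t * g' t) + F t * K t) * Real.exp (I t) := by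
    intro t ht hFt
    have hm : 0 < μ t := hμpos t ht
    have hgg : 0 ≤ g t := hg t ht
    have hmne : μ t ≠ 0 := ne_of_gt hm
    have hmg1 : μ t * g t ≤ 1 := by
      have : (0:ℝ) ≤ 1 - μ t * g t := hFt
      linarith
    have e1 : (1 / (2 * μ t)) * (γ t - μ' t / μ t) = (γ t * μ t - μ' t) / (2 * μ t ^ 2) := by
      field_simp
      try ring
      try tauto
    have hβ2 : 2 * μ t ^ 2 * β t ≤ γ t * μ t - μ' t := by
      have h := (hβc t ht).trans_eq e1
      rw [le_div_iff₀ (by positivity)] at h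
      linarith
    have e2 : (μ t / 2) * (γ t - μ' t / μ t) = (γ t * μ t - μ' t) / 2 := by
      field_simp
    have hα2 : 2 * α t ≤ γ t * μ t - μ' t := by
      have h := (hαc t ht).trans_eq e2
      linarith
    have hc : 0 ≤ γ t * μ t - μ' t := by
      have hb := hβ t ht
      nlinarith [sq_nonneg (μ t)]
    have hgi := hineq t ht
    have key2 : 2 * μ t * (μ' t * g t + μ t * g' t) ≤ (1 - μ t * g t) * (γ t * μ t - μ' t) := by
      nlinarith [mul_nonneg (mul_nonneg (mul_nonneg hm.le hc) hgg) (sub_nonneg.2 hmg1),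
        mul_nonneg (mul_nonneg (sq_nonneg (μ t)) (sub_nonneg.2 hα2)) (sq_nonneg (g t)),
        mul_le_mul_of_nonneg_left hgi (by positivity : (0:ℝ) ≤ 2 * μ t ^ 2)]
    apply mul_nonneg _ (Real.exp_pos _).le
    rw [hKeq t ht]
    have heq : -(μ' t * g t + μ t * g' t) + F t * ((γ t * μ t - μ' t) / (2 * μ t))
        = ((1 - μ t * g t) * (γ t * μ t - μ' t) - 2 * μ t * (μ' t * g t + μ t * g' t))
          / (2 * μ t) := by
      simp only [hFdef]
      field_simp
      ring
    rw [heq]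
    exact div_nonneg (by linarith) (by positivity)
  -- main argument
  intro t ht
  refine ⟨hg t ht, ?_⟩
  by_contra hcon
  push_neg at hcon
  have hmt := hμpos t ht
  have hFt : F t ≤ 0 := by
    have h1 : 1 / μ t ≤ g t := hcon
    have : 1 ≤ μ t * g t := by
      rw [div_le_iff₀ hmt] at h1
      linarith [h1]
    simp only [hFdef]; linarith
  set S : Set ℝ := Set.Icc t0 t ∩ F ⁻¹' Set.Iic 0 with hSdef
  have hSne : S.Nonempty := ⟨t, ⟨ht, le_refl t⟩, hFt⟩
  have hSbdd : BddBelow S := ⟨t0, fun x hx => hx.1.1⟩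
  have hScl : IsClosed S :=
    (hFcont.mono (Set.Icc_subset_Ici_self)).preimage_isClosed_of_isClosed isClosed_Icc
      isClosed_Iic
  have hs1 := hScl.csInf_mem hSne hSbdd
  set s1 := sInf S with hs1def
  obtain ⟨⟨hs1l, hs1r⟩, hFs1⟩ := hs1
  have hFs1' : F s1 ≤ 0 := hFs1
  have hFt0 : 0 < F t0 := by simp only [hFdef]; linarith
  have ht0s1 : t0 < s1 := by
    rcases lt_or_eq_of_le hs1l with h | h
    · exact h
    · exfalso; rw [← h] at hFs1'; linarith
  have hpos : ∀ x ∈ Set.Ico t0 s1, 0 < F x := by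
    intro x hx
    by_contra h
    push_neg at h
    have hxS : x ∈ S := ⟨⟨hx.1, le_trans hx.2.le hs1r⟩, h⟩
    have := csInf_le hSbdd hxS
    exact absurd this (not_le.2 hx.2)
  have hmono : MonotoneOn G (Set.Icc t0 s1) := by
    apply monotoneOn_of_deriv_nonneg (convex_Icc t0 s1)
    · exact ((hFcont.mono Set.Icc_subset_Ici_self).mul
        ((Real.continuous_exp.comp hIcont).continuousOn))
    · intro x hx
      rw [interior_Icc] at hx
      exact ((hGderiv x (le_of_lt hx.1 : t0 ≤ x)).differentiableAt).differentiableWithinAt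
    · intro x hx
      rw [interior_Icc] at hx
      have hxI : x ∈ Set.Ici t0 := le_of_lt hx.1
      rw [(hGderiv x hxI).deriv]
      exact hkey x hxI (le_of_lt (hpos x ⟨le_of_lt hx.1, hx.2⟩))
  have hle := hmono (Set.left_mem_Icc.2 (le_of_lt ht0s1)) (Set.right_mem_Icc.2 (le_of_lt ht0s1))
    (le_of_lt ht0s1)
  have hI0 : I t0 = 0 := intervalIntegral.integral_same
  have hGt0 : 0 < G t0 := by
    simp only [hGdef, hI0, Real.exp_zero, mul_one]
    exact hFt0
  have hGs1 : G s1 ≤ 0 :=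
    mul_nonpos_of_nonpos_of_nonneg hFs1' (Real.exp_pos _).le
  linarith
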